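/- arXiv:2011.14524 — 3 statements merged into one kernel-verified Lean document; each statement's English description precedes it below -/
import Mathlib

section
/- Let p be prime, G cyclic of order p with generator σ, and M a finitely generated torsion-free ℤ[G]-module with M^G = 0. Then the rank of M as an abelian group is divisible by p - 1. -/
open Polynomial TensorProduct Module

set_option maxHeartbeats 1000000
set_option synthInstance.maxHeartbeats 400000

/-- let `p` be prime, `G` cyclic of order `p` with generator `σ`, and `M` a
finitely generated torsion-free `ℤ[G]`-module (modeled by a f.g. torsion-free abelian group
with an additive automorphism `σ` satisfying `σ^p = 1`) with `M^G = 0`.  Then the rank of `M`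
as an abelian group is divisible by `p - 1`. -/
theorem stmt_4 {p : ℕ} (hp : p.Prime) {M : Type*} [AddCommGroup M]
    [Module.Finite ℤ M] [NoZeroSMulDivisors ℤ M]
    (σ : AddAut M) (hσ : p • σ = 0)
    (hinv : ∀ m : M, σ m = m → m = 0) :
    (p - 1) ∣ Module.finrank ℤ M := by
  classical
  haveI : Fact p.Prime := ⟨hp⟩
  have hp0 : 0 < p := hp.pos
  haveI : Module.Flat ℤ ℚ := IsLocalization.flat ℚ (nonZeroDivisors ℤ)
  -- σ as a ℤ-linear endomorphism
  set g : Module.End ℤ M := AddMonoidHom.toIntLinearMap σ.toAddMonoidHom with hgdef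
  have hgpow : ∀ (n : ℕ) (m : M), (g ^ n) m = (n • σ) m := by
    intro n
    induction n with
    | zero => intro m; simp
    | succ n ih =>
        intro m
        rw [pow_succ, succ_nsmul, Module.End.mul_apply]
        have : g m = σ m := rfl
        rw [this, ih (σ m)]
        rfl
  have hgp : g ^ p = 1 := by
    ext m
    rw [hgpow p m, hσ]
    rfl
  -- base change to ℚ
  set f : Module.End ℚ (ℚ ⊗[ℤ] M) := LinearMap.baseChange ℚ g with hfdef
  have hfp : f ^ p = 1 := by
    rw [hfdef, ← LinearMap.baseChange_pow, hgp, LinearMap.baseChange_one]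
  -- injectivity of g - 1, hence of f - 1
  have hginj : Function.Injective (g - 1 : Module.End ℤ M) := by
    rw [← LinearMap.ker_eq_bot]
    ext m
    simp only [LinearMap.mem_ker, LinearMap.sub_apply, Module.End.one_apply,
      Submodule.mem_bot, sub_eq_zero]
    constructor
    · intro h; exact hinv m h
    · intro h; simp [h]
  have hfinj : Function.Injective (f - 1 : Module.End ℚ (ℚ ⊗[ℤ] M)) := by
    have h1 : (f - 1 : Module.End ℚ (ℚ ⊗[ℤ] M)) = LinearMap.baseChange ℚ (g - 1) := by
      rw [hfdef, LinearMap.baseChange_sub, LinearMap.baseChange_one]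
    rw [h1]
    have h2 := Module.Flat.lTensor_preserves_injective_linearMap
      (M := ℚ) (g - 1 : Module.End ℤ M) hginj
    rwa [show (LinearMap.lTensor ℚ (g - 1 : Module.End ℤ M) : ℚ ⊗[ℤ] M → ℚ ⊗[ℤ] M)
      = LinearMap.baseChange ℚ (g - 1) from rfl] at h2
  -- the geometric sum in f vanishes
  have hΦ : (∑ i ∈ Finset.range p, f ^ i) = 0 := by
    have hmul : (f - 1) * (∑ i ∈ Finset.range p, f ^ i) = 0 := by
      rw [mul_geom_sum, hfp, sub_self]
    refine LinearMap.ext fun v => ?_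
    apply hfinj
    have := congrArg (fun (h : Module.End ℚ (ℚ ⊗[ℤ] M)) => h v) hmul
    simpa using this
  -- f is a root of the p-th cyclotomic polynomial
  have hroot : aeval f (cyclotomic p ℚ) = 0 := by
    rw [cyclotomic_prime ℚ p]
    simpa using hΦ
  haveI hirr : Fact (Irreducible (cyclotomic p ℚ)) := ⟨cyclotomic.irreducible_rat hp0⟩
  have hne : cyclotomic p ℚ ≠ 0 := cyclotomic_ne_zero p ℚ
  -- make ℚ ⊗ M a vector space over K = ℚ[X]/(Φ_p)
  have hker : ∀ a ∈ Ideal.span {cyclotomic p ℚ},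
      ((aeval f).toRingHom : ℚ[X] →+* Module.End ℚ (ℚ ⊗[ℤ] M)) a = 0 := by
    intro a ha
    obtain ⟨c, rfl⟩ := Ideal.mem_span_singleton.mp ha
    show aeval f (cyclotomic p ℚ * c) = 0
    rw [map_mul, hroot, zero_mul]
  let ψ : AdjoinRoot (cyclotomic p ℚ) →+* Module.End ℚ (ℚ ⊗[ℤ] M) :=
    Ideal.Quotient.lift (Ideal.span {cyclotomic p ℚ}) (aeval f).toRingHom hker
  have hψmk : ∀ a : ℚ[X], ψ (AdjoinRoot.mk (cyclotomic p ℚ) a) = aeval f a := fun a =>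
    Ideal.Quotient.lift_mk _ _ _
  have hψalg : ∀ q : ℚ, ψ (algebraMap ℚ (AdjoinRoot (cyclotomic p ℚ)) q) = algebraMap ℚ (Module.End ℚ (ℚ ⊗[ℤ] M)) q := by
    intro q
    show ψ (AdjoinRoot.mk (cyclotomic p ℚ) (C q)) = _
    rw [hψmk, aeval_C]
  letI : Module (AdjoinRoot (cyclotomic p ℚ)) (ℚ ⊗[ℤ] M) := Module.compHom (ℚ ⊗[ℤ] M) ψ
  haveI : IsScalarTower ℚ (AdjoinRoot (cyclotomic p ℚ)) (ℚ ⊗[ℤ] M) := by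
    constructor
    intro q k v
    show ψ (q • k) v = q • (ψ k v)
    rw [Algebra.smul_def, map_mul, hψalg, Module.End.mul_apply,
      Module.algebraMap_end_apply]
  have key : finrank ℚ (AdjoinRoot (cyclotomic p ℚ)) * finrank (AdjoinRoot (cyclotomic p ℚ)) (ℚ ⊗[ℤ] M) = finrank ℚ (ℚ ⊗[ℤ] M) :=
    Module.finrank_mul_finrank ℚ (AdjoinRoot (cyclotomic p ℚ)) (ℚ ⊗[ℤ] M)
  have h1 : finrank ℚ (AdjoinRoot (cyclotomic p ℚ)) = p - 1 := by
    rw [(AdjoinRoot.powerBasis hne).finrank, AdjoinRoot.powerBasis_dim, natDegree_cyclotomic, Nat.totient_prime hp]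
  have h2 : finrank ℚ (ℚ ⊗[ℤ] M) = finrank ℤ M := Module.finrank_baseChange
  exact ⟨finrank (AdjoinRoot (cyclotomic p ℚ)) (ℚ ⊗[ℤ] M), by rw [← h2, ← key, h1]⟩
end

section
/- Let G be cyclic of prime order p with generator σ acting on an abelian group A with A^G = 0 (so the trace map is zero on A), and suppose A is finitely generated, torsion-free, and nonzero. Then H¹(G,A) ≅ (ℤ/pℤ)^r where r·(p-1) = rank_ℤ A; in particular H¹(G,A) ≠ 0. -/
open Polynomial

private lemma aux_index_mul {A : Type*} [AddCommGroup A] (f g : A →+ A)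
    (hf : Function.Injective f) :
    (AddMonoidHom.range (f.comp g)).index
      = f.range.index * g.range.index := by
  have hle : (f.comp g).range ≤ f.range := by
    rintro x ⟨y, rfl⟩; exact ⟨g y, rfl⟩
  have h1 := AddSubgroup.relIndex_mul_index hle
  have h2 : AddSubgroup.comap f (f.comp g).range = g.range := by
    ext x
    simp only [AddSubgroup.mem_comap, AddMonoidHom.mem_range, AddMonoidHom.coe_comp,
      Function.comp_apply]
    exact ⟨fun ⟨y, hy⟩ => ⟨y, hf hy⟩, fun ⟨y, hy⟩ => ⟨y, by rw [hy]⟩⟩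
  have h3 := AddSubgroup.index_comap ((f.comp g).range) f
  rw [h2] at h3
  rw [← h1, ← h3, mul_comm]

/-- `cyclotomic p ℤ ≡ (X-1)^(p-1) mod p`. -/
private lemma aux_cyc_mod (p : ℕ) (hp : p.Prime) :
    ∃ g : ℤ[X], cyclotomic p ℤ - (X - 1) ^ (p - 1) = C (p : ℤ) * g := by
  haveI : Fact p.Prime := ⟨hp⟩
  have hmap : Polynomial.map (Int.castRingHom (ZMod p)) (cyclotomic p ℤ - (X - 1) ^ (p - 1)) = 0 := by
    have h1 : ((X : (ZMod p)[X]) - 1) ^ p = X ^ p - 1 := by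
      simpa using sub_pow_char (R := (ZMod p)[X]) (X) 1
    have h2 : cyclotomic p (ZMod p) * (X - 1) = X ^ p - 1 :=
      cyclotomic_prime_mul_X_sub_one (ZMod p) p
    have h3 : (X - 1 : (ZMod p)[X]) ≠ 0 := by
      simpa using (Polynomial.monic_X_sub_C (1 : ZMod p)).ne_zero
    have h4 : cyclotomic p (ZMod p) = (X - 1) ^ (p - 1) := by
      apply mul_right_cancel₀ h3
      rw [h2, ← h1, ← pow_succ, Nat.sub_add_cancel hp.one_le]
    rw [Polynomial.map_sub, map_cyclotomic, h4, Polynomial.map_pow, Polynomial.map_sub,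
      Polynomial.map_X, Polynomial.map_one, sub_self]
  have hdvd : C (p:ℤ) ∣ (cyclotomic p ℤ - (X - 1) ^ (p - 1)) := by
    rw [C_dvd_iff_dvd_coeff]
    intro i
    have := congrArg (fun q => Polynomial.coeff q i) hmap
    simp only [Polynomial.coeff_map, Polynomial.coeff_zero, eq_intCast] at this
    exact_mod_cast (ZMod.intCast_zmod_eq_zero_iff_dvd _ p).mp this
  obtain ⟨g, hg⟩ := hdvd
  exact ⟨g, hg⟩

/-- The key norm identity: `∏_{k=1}^{p-1} (X^k - 1) ≡ (-1)^(p-1) p  mod Φ_p` over `ℤ`. -/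
private lemma aux_prod_eq (p : ℕ) (hp : p.Prime) :
    ∃ q : ℤ[X],
      (∏ k ∈ (Finset.range p).erase 0, (X ^ k - 1)) - C ((-1) ^ (p - 1) * (p : ℤ))
        = cyclotomic p ℤ * q := by
  haveI : Fact p.Prime := ⟨hp⟩
  set S := (Finset.range p).erase 0 with hS
  have hcardS : S.card = p - 1 := by
    rw [hS, Finset.card_erase_of_mem (Finset.mem_range.mpr hp.pos), Finset.card_range]
  set ζ : ℂ := Complex.exp (2 * Real.pi * Complex.I / p) with hζdef
  have hζ : IsPrimitiveRoot ζ p := Complex.isPrimitiveRoot_exp p hp.ne_zero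
  -- primitive roots are exactly ζ^k for k ∈ S
  have hinj : Set.InjOn (fun k => ζ ^ k) S := by
    intro a ha b hb hab
    have ha' : a < p := Finset.mem_range.mp (Finset.mem_of_mem_erase ha)
    have hb' : b < p := Finset.mem_range.mp (Finset.mem_of_mem_erase hb)
    exact hζ.pow_inj ha' hb' hab
  have hsub : S.image (fun k => ζ ^ k) ⊆ primitiveRoots p ℂ := by
    intro x hx
    obtain ⟨k, hk, rfl⟩ := Finset.mem_image.mp hx
    have hk0 : k ≠ 0 := Finset.ne_of_mem_erase hk
    have hkp : k < p := Finset.mem_range.mp (Finset.mem_of_mem_erase hk)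
    have hcop : k.Coprime p := by
      rw [Nat.coprime_comm]
      exact (Nat.Prime.coprime_iff_not_dvd hp).mpr fun hd => by
        have := Nat.le_of_dvd (Nat.pos_of_ne_zero hk0) hd
        omega
    exact (mem_primitiveRoots hp.pos).mpr (hζ.pow_of_coprime k hcop)
  have himg : S.image (fun k => ζ ^ k) = primitiveRoots p ℂ := by
    apply Finset.eq_of_subset_of_card_le hsub
    rw [Finset.card_image_of_injOn hinj, hcardS, hζ.card_primitiveRoots, Nat.totient_prime hp]
  -- product formula: ∏_{k ∈ S} (1 - ζ^k) = p
  have hprod : ∏ k ∈ S, (1 - ζ ^ k) = (p : ℂ) := by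
    have h1 : cyclotomic p ℂ = ∏ μ ∈ primitiveRoots p ℂ, (X - C μ) :=
      cyclotomic_eq_prod_X_sub_primitiveRoots hζ
    have h2 : eval 1 (cyclotomic p ℂ) = (p : ℂ) := eval_one_cyclotomic_prime
    rw [h1, eval_prod] at h2
    rw [← himg, Finset.prod_image hinj] at h2
    simpa using h2
  -- the ℤ-polynomial F vanishes at ζ
  set F : ℤ[X] := (∏ k ∈ S, (X ^ k - 1)) - C ((-1) ^ (p - 1) * (p : ℤ)) with hF
  have hFζ : aeval ζ F = 0 := by
    have h1 : aeval ζ (∏ k ∈ S, ((X : ℤ[X]) ^ k - 1)) = ∏ k ∈ S, (ζ ^ k - 1) := by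
      rw [map_prod]
      exact Finset.prod_congr rfl fun k _ => by simp
    have h2 : ∏ k ∈ S, (ζ ^ k - 1) = (-1 : ℂ) ^ (p - 1) * (p : ℂ) := by
      calc ∏ k ∈ S, (ζ ^ k - 1) = ∏ k ∈ S, (-1 : ℂ) * (1 - ζ ^ k) := by
            exact Finset.prod_congr rfl fun k _ => by ring
        _ = (-1 : ℂ) ^ S.card * ∏ k ∈ S, (1 - ζ ^ k) := by
            rw [Finset.prod_mul_distrib, Finset.prod_const]
        _ = (-1 : ℂ) ^ (p - 1) * (p : ℂ) := by rw [hcardS, hprod]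
    rw [hF, map_sub, h1, h2, aeval_C]
    push_cast
    ring
  -- hence cyclotomic p ℚ divides F over ℚ, hence cyclotomic p ℤ ∣ F over ℤ
  have hdvdQ : cyclotomic p ℚ ∣ F.map (Int.castRingHom ℚ) := by
    rw [cyclotomic_eq_minpoly_rat hζ hp.pos]
    apply minpoly.dvd ℚ ζ
    rw [show (Int.castRingHom ℚ) = algebraMap ℤ ℚ from rfl, aeval_map_algebraMap]
    exact hFζ
  have hdvdZ : cyclotomic p ℤ ∣ F := by
    rw [← modByMonic_eq_zero_iff_dvd (cyclotomic.monic p ℤ)]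
    have hm : (F %ₘ cyclotomic p ℤ).map (Int.castRingHom ℚ)
        = F.map (Int.castRingHom ℚ) %ₘ cyclotomic p ℚ := by
      rw [map_modByMonic _ (cyclotomic.monic p ℤ), map_cyclotomic]
    have hz : F.map (Int.castRingHom ℚ) %ₘ cyclotomic p ℚ = 0 :=
      (modByMonic_eq_zero_iff_dvd (cyclotomic.monic p ℚ)).mpr hdvdQ
    have := hm.trans hz
    exact Polynomial.map_injective _ Int.cast_injective (by simpa using this)
  exact hdvdZ

/-- let `G` be cyclic of prime order `p ≤ 23` with generator `σ` acting on a
finitely generated, torsion-free, nonzero abelian group `A` with `A^G = 0` (so the trace map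
vanishes on `A`).  Then `H¹(G, A) = A/(1-σ)A ≅ (ℤ/pℤ)^r` where `r·(p-1) = rank_ℤ A`; in
particular `r > 0`, so `H¹(G, A) ≠ 0`. -/
theorem stmt_6 {p : ℕ} (hp : p.Prime) (hp23 : p ≤ 23) {A : Type*} [AddCommGroup A]
    [Module.Finite ℤ A] [NoZeroSMulDivisors ℤ A] [Nontrivial A]
    (σ : AddAut A) (hσ : p • σ = 0)
    (hinv : ∀ a : A, σ a = a → a = 0) :
    ∃ r : ℕ, 0 < r ∧ r * (p - 1) = Module.finrank ℤ A ∧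
      Nonempty ((A ⧸ (AddMonoidHom.id A - AddEquiv.toAddMonoidHom (σ : A ≃+ A)).range)
        ≃+ (Fin r → ZMod p)) := by
  classical
  haveI : Fact p.Prime := ⟨hp⟩
  have hp1 : 1 < p := hp.one_lt
  set n := Module.finrank ℤ A with hn
  -- σ as a ℤ-linear endomorphism
  set s : Module.End ℤ A := AddMonoidHom.toIntLinearMap (σ : A ≃+ A).toAddMonoidHom with hsdef
  have hs_apply : ∀ a : A, s a = σ a := fun a => rfl
  have hpow : ∀ (m : ℕ) (a : A), (s ^ m) a = (m • σ) a := by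
    intro m
    induction m with
    | zero => intro a; rw [zero_nsmul]; rfl
    | succ m ih =>
      intro a
      rw [pow_succ, succ_nsmul, Module.End.mul_apply, AddAut.add_apply]
      exact ih (s a)
  have hsp : s ^ p = 1 := by
    ext a
    rw [hpow, hσ, Module.End.one_apply]
    rfl
  set τ : Module.End ℤ A := s - 1 with hτdef
  have hτ_apply : ∀ a : A, τ a = σ a - a := by
    intro a
    rw [hτdef, LinearMap.sub_apply, Module.End.one_apply, hs_apply]
  have hτinj : Function.Injective τ := by
    intro x y hxy
    have h0 : τ (x - y) = 0 := by rw [map_sub, hxy, sub_self]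
    rw [hτ_apply, sub_eq_zero] at h0
    exact sub_eq_zero.mp (hinv _ h0)
  have hτkinj : ∀ k : ℕ, Function.Injective ⇑(τ ^ k) := by
    intro k
    have hc : ⇑(τ ^ k) = (⇑τ)^[k] := funext fun a => Module.End.pow_apply τ k a
    rw [hc]
    exact Function.Injective.iterate hτinj k
  -- the cyclotomic polynomial annihilates `s`
  have hτpoly : Polynomial.aeval s ((X : ℤ[X]) - 1) = τ := by
    rw [map_sub, Polynomial.aeval_X, map_one, hτdef]
  have hΦ : Polynomial.aeval s (cyclotomic p ℤ) = 0 := by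
    have h1 : τ * Polynomial.aeval s (cyclotomic p ℤ) = 0 := by
      have hxp : ((X : ℤ[X]) - 1) * cyclotomic p ℤ = X ^ p - 1 := by
        rw [mul_comm]; exact cyclotomic_prime_mul_X_sub_one ℤ p
      calc τ * Polynomial.aeval s (cyclotomic p ℤ)
          = Polynomial.aeval s ((X - 1) * cyclotomic p ℤ) := by rw [map_mul, hτpoly]
        _ = Polynomial.aeval s ((X : ℤ[X]) ^ p - 1) := by rw [hxp]
        _ = 0 := by rw [map_sub, map_pow, Polynomial.aeval_X, map_one, hsp, sub_self]
    ext a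
    have h2 : τ ((Polynomial.aeval s (cyclotomic p ℤ)) a) = 0 := by
      rw [← Module.End.mul_apply, h1, LinearMap.zero_apply]
    rw [LinearMap.zero_apply]
    exact hτinj (by rw [h2, map_zero])
  set P : Module.End ℤ A := (p : ℤ) • 1 with hPdef
  have hP_apply : ∀ a : A, P a = (p : ℤ) • a := by
    intro a; rw [hPdef, LinearMap.smul_apply, Module.End.one_apply]
  have haevalC : ∀ c : ℤ, ∀ a : A, (Polynomial.aeval s (C c)) a = c • a := by
    intro c a
    rw [Polynomial.aeval_C, Algebra.algebraMap_eq_smul_one, LinearMap.smul_apply,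
      Module.End.one_apply]
  -- (a) τ^(p-1) A ⊆ p A
  have hap : ∀ a : A, (τ ^ (p - 1)) a ∈ P.toAddMonoidHom.range := by
    obtain ⟨g, hg⟩ := aux_cyc_mod p hp
    have h1 : Polynomial.aeval s ((X - 1 : ℤ[X]) ^ (p - 1)) = τ ^ (p - 1) := by
      rw [map_pow, hτpoly]
    have h2 : (0 : Module.End ℤ A) - τ ^ (p - 1)
        = Polynomial.aeval s (C (p : ℤ)) * Polynomial.aeval s g := by
      rw [← map_mul, ← hg, map_sub, hΦ, h1]
    intro a
    refine ⟨-((Polynomial.aeval s g) a), ?_⟩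
    have h3 := congrArg (fun f : Module.End ℤ A => f a) h2
    simp only [LinearMap.sub_apply, LinearMap.zero_apply, Module.End.mul_apply] at h3
    have h4 : (Polynomial.aeval s (C (p : ℤ))) ((Polynomial.aeval s g) a)
        = (p : ℤ) • ((Polynomial.aeval s g) a) := haevalC _ _
    rw [h4] at h3
    have h5 : (τ ^ (p - 1)) a = -((p : ℤ) • ((Polynomial.aeval s g) a)) := by
      rw [zero_sub] at h3
      exact neg_eq_iff_eq_neg.mp h3
    show P (-((Polynomial.aeval s g) a)) = (τ ^ (p - 1)) a
    rw [hP_apply, smul_neg, h5]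
  -- (b) p A ⊆ τ^(p-1) A
  have hpa : ∀ a : A, (p : ℤ) • a ∈ (τ ^ (p - 1)).toAddMonoidHom.range := by
    obtain ⟨q, hq⟩ := aux_prod_eq p hp
    set S := (Finset.range p).erase 0 with hS
    have hcardS : S.card = p - 1 := by
      rw [hS, Finset.card_erase_of_mem (Finset.mem_range.mpr hp.pos), Finset.card_range]
    have hfact : (∏ k ∈ S, ((X : ℤ[X]) ^ k - 1))
        = (X - 1) ^ (p - 1) * ∏ k ∈ S, (∑ i ∈ Finset.range k, (X : ℤ[X]) ^ i) := by
      calc ∏ k ∈ S, ((X : ℤ[X]) ^ k - 1)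
          = ∏ k ∈ S, ((∑ i ∈ Finset.range k, (X : ℤ[X]) ^ i) * (X - 1)) :=
            Finset.prod_congr rfl fun k _ => (geom_sum_mul X k).symm
        _ = (∏ k ∈ S, (∑ i ∈ Finset.range k, (X : ℤ[X]) ^ i)) * ∏ k ∈ S, ((X : ℤ[X]) - 1) :=
            Finset.prod_mul_distrib
        _ = _ := by rw [Finset.prod_const, hcardS, mul_comm]
    set U : Module.End ℤ A :=
      Polynomial.aeval s (∏ k ∈ S, (∑ i ∈ Finset.range k, (X : ℤ[X]) ^ i)) with hU
    have hkey : τ ^ (p - 1) * U = Polynomial.aeval s (C ((-1) ^ (p - 1) * (p : ℤ))) := by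
      have := congrArg (Polynomial.aeval s) hq
      rw [map_sub, show (Polynomial.aeval s) (cyclotomic p ℤ * q) = 0 by
        rw [map_mul, hΦ, zero_mul]] at this
      -- this : aeval (∏ ...) - aeval (C c) = 0
      have h2 : Polynomial.aeval s (∏ k ∈ S, ((X : ℤ[X]) ^ k - 1))
          = Polynomial.aeval s (C ((-1) ^ (p - 1) * (p : ℤ))) := by
        rw [sub_eq_zero] at this
        exact this
      rw [hfact, map_mul, map_pow, hτpoly] at h2
      exact h2
    intro a
    refine ⟨((-1 : ℤ) ^ (p - 1)) • (U a), ?_⟩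
    show (τ ^ (p - 1)) (((-1 : ℤ) ^ (p - 1)) • (U a)) = (p : ℤ) • a
    rw [map_zsmul, ← Module.End.mul_apply, hkey, haevalC, smul_smul, ← mul_assoc, ← mul_pow]
    norm_num
  -- index multiplicativity along powers of τ
  have hcomp : ∀ k : ℕ, ((τ ^ (k + 1)).toAddMonoidHom)
      = ((τ ^ k).toAddMonoidHom).comp (τ.toAddMonoidHom) := by
    intro k
    ext a
    simp [pow_succ, Module.End.mul_apply]
  have hiter : ∀ k : ℕ,
      ((τ ^ k).toAddMonoidHom.range).index = ((τ.toAddMonoidHom.range).index) ^ k := by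
    intro k
    induction k with
    | zero =>
      have htop : ((τ ^ 0 : Module.End ℤ A).toAddMonoidHom.range) = ⊤ := by
        rw [eq_top_iff]
        intro x _
        exact ⟨x, by simp⟩
      rw [htop, pow_zero, AddSubgroup.index_top]
    | succ k ih =>
      rw [hcomp k, aux_index_mul _ _ (hτkinj k), ih, pow_succ]
  -- the two subgroups coincide
  have heq : (τ ^ (p - 1)).toAddMonoidHom.range = P.toAddMonoidHom.range := by
    apply le_antisymm
    · rintro x ⟨a, rfl⟩
      exact hap a
    · rintro x ⟨a, rfl⟩
      have := hpa a
      rwa [show P.toAddMonoidHom a = (p : ℤ) • a from hP_apply a]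
  -- the index of pA is p^n
  have hPidx : (P.toAddMonoidHom.range).index = p ^ n := by
    have hRP : P.toAddMonoidHom.range = (LinearMap.range P).toAddSubgroup := by
      ext x
      simp only [AddMonoidHom.mem_range, Submodule.mem_toAddSubgroup, LinearMap.mem_range]
      rfl
    set ι := Module.Free.ChooseBasisIndex ℤ A with hι
    let b := Module.Free.chooseBasis ℤ A
    let e₁ : A ≃ₗ[ℤ] (ι → ℤ) := b.equivFun
    have hmapP : Submodule.map (e₁ : A →ₗ[ℤ] (ι → ℤ)) (LinearMap.range P)
        = Submodule.pi Set.univ (fun _ : ι => Ideal.span {(p : ℤ)}) := by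
      ext x
      simp only [Submodule.mem_map, LinearMap.mem_range, Submodule.mem_pi, Set.mem_univ,
        forall_true_left, Ideal.mem_span_singleton]
      constructor
      · rintro ⟨w, ⟨y, rfl⟩, rfl⟩ i
        rw [hP_apply, map_smul]
        exact ⟨e₁ y i, rfl⟩
      · intro h
        choose c hc using fun i => h i
        refine ⟨P (e₁.symm c), ⟨e₁.symm c, rfl⟩, ?_⟩
        rw [hP_apply, map_smul, LinearEquiv.coe_coe, e₁.apply_symm_apply]
        funext i
        rw [Pi.smul_apply, smul_eq_mul, ← hc i]
    have equiv1 : (A ⧸ LinearMap.range P)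
        ≃ₗ[ℤ] ((ι → ℤ) ⧸ Submodule.pi Set.univ fun _ : ι => Ideal.span {(p : ℤ)}) :=
      Submodule.Quotient.equiv _ _ e₁ hmapP
    have equiv2 := Submodule.quotientPi (fun _ : ι => Ideal.span {(p : ℤ)})
    have equiv3 : ∀ _ : ι, (ℤ ⧸ Ideal.span {((p : ℕ) : ℤ)}) ≃+ ZMod p :=
      fun _ => (Int.quotientSpanNatEquivZMod p).toAddEquiv
    have hcount : Nat.card (A ⧸ LinearMap.range P) = p ^ n := by
      have := Nat.card_congr
        ((equiv1.toEquiv).trans ((equiv2.toEquiv).trans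
          (Equiv.piCongrRight fun i => (equiv3 i).toEquiv)))
      rw [this, Nat.card_pi]
      simp only [Nat.card_zmod, Finset.prod_const, Finset.card_univ]
      rw [hn, Module.finrank_eq_card_chooseBasisIndex ℤ A]
    rw [AddSubgroup.index_eq_card, hRP]
    exact hcount
  -- putting the counting together
  have hmain : ((τ.toAddMonoidHom.range).index) ^ (p - 1) = p ^ n := by
    rw [← hiter, heq, hPidx]
  have hn1 : 0 < n := Module.finrank_pos
  set x := (τ.toAddMonoidHom.range).index with hx
  have hx_dvd : x ∣ p ^ n := by
    have h : x ∣ x ^ (p - 1) := dvd_pow_self x (by omega)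
    rwa [hmain] at h
  obtain ⟨d, hd_le, hxd⟩ := (Nat.dvd_prime_pow hp).mp hx_dvd
  have hdn : d * (p - 1) = n := by
    apply Nat.pow_right_injective hp.two_le
    show p ^ (d * (p - 1)) = p ^ n
    rw [pow_mul, ← hxd, hmain]
  have hd0 : 0 < d := by
    rcases Nat.eq_zero_or_pos d with h | h
    · subst h; simp at hdn; omega
    · exact h
  refine ⟨d, hd0, hdn, ?_⟩
  -- identify the statement's subgroup with range τ
  have hHs : (AddMonoidHom.id A - AddEquiv.toAddMonoidHom (σ : A ≃+ A)).range
      = τ.toAddMonoidHom.range := by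
    ext y
    simp only [AddMonoidHom.mem_range, AddMonoidHom.sub_apply, AddMonoidHom.id_apply,
      AddEquiv.coe_toAddMonoidHom, LinearMap.toAddMonoidHom_coe]
    constructor
    · rintro ⟨a, rfl⟩
      exact ⟨-a, by rw [hτ_apply]; simp; abel⟩
    · rintro ⟨a, rfl⟩
      exact ⟨-a, by rw [hτ_apply]; simp; abel⟩
  have hcardQ :
      Nat.card (A ⧸ (AddMonoidHom.id A - AddEquiv.toAddMonoidHom (σ : A ≃+ A)).range)
        = p ^ d := by
    rw [← AddSubgroup.index_eq_card, hHs, ← hx, hxd]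
  have hfinQ : Finite (A ⧸ (AddMonoidHom.id A - AddEquiv.toAddMonoidHom (σ : A ≃+ A)).range) :=
    Nat.finite_of_card_ne_zero (by rw [hcardQ]; positivity)
  have hsmulQ : ∀ a : A,
      p • a ∈ (AddMonoidHom.id A - AddEquiv.toAddMonoidHom (σ : A ≃+ A)).range := by
    intro a
    rw [hHs]
    have h1 : (p : ℤ) • a ∈ (τ ^ (p - 1)).toAddMonoidHom.range := hpa a
    have h2 : (τ ^ (p - 1)).toAddMonoidHom.range ≤ τ.toAddMonoidHom.range := by
      rintro y ⟨c, rfl⟩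
      refine ⟨(τ ^ (p - 2)) c, ?_⟩
      show τ ((τ ^ (p - 2)) c) = (τ ^ (p - 1)).toAddMonoidHom c
      rw [← Module.End.mul_apply, ← pow_succ']
      congr 2
      omega
    have h3 := h2 h1
    rwa [natCast_zsmul] at h3
  letI : Module (ZMod p)
      (A ⧸ (AddMonoidHom.id A - AddEquiv.toAddMonoidHom (σ : A ≃+ A)).range) :=
    QuotientAddGroup.zmodModule hsmulQ
  letI := hfinQ
  haveI hMF : Module.Finite (ZMod p)
      (A ⧸ (AddMonoidHom.id A - AddEquiv.toAddMonoidHom (σ : A ≃+ A)).range) :=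
    Module.Finite.of_finite
  haveI hMFree : Module.Free (ZMod p)
      (A ⧸ (AddMonoidHom.id A - AddEquiv.toAddMonoidHom (σ : A ≃+ A)).range) :=
    Module.Free.of_divisionRing (ZMod p) _
  let bQ := @Module.finBasis (ZMod p)
    (A ⧸ (AddMonoidHom.id A - AddEquiv.toAddMonoidHom (σ : A ≃+ A)).range)
    _ _ _ hMFree _ hMF
  have hd' : Module.finrank (ZMod p)
      (A ⧸ (AddMonoidHom.id A - AddEquiv.toAddMonoidHom (σ : A ≃+ A)).range) = d := by
    have hcc := Nat.card_congr (bQ.equivFun.toEquiv)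
    rw [hcardQ, Nat.card_pi] at hcc
    simp only [Nat.card_zmod, Finset.prod_const, Finset.card_univ, Fintype.card_fin] at hcc
    exact (Nat.pow_right_injective hp.two_le hcc).symm
  refine ⟨?_⟩
  rw [← hd']
  exact bQ.equivFun.toAddEquiv
end

section
/- Let G = ⟨σ⟩ be cyclic of order n acting on an abelian group A generated as a ℤ[G]-module by one element Q, and suppose the trace P = Σ_{ℓ=0}^{n-1} σ^ℓ·Q is a non-torsion element of A^G such that σ^ℓ·Q has trace P for each ℓ. Then an element Σ_ℓ a_ℓ (σ^ℓ·Q) has trace zero if and only if Σ_ℓ a_ℓ = 0, and consequently ker(Tr) = (σ-1)·A, i.e. H¹(G,A) = 0. -/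
/-- let `G = ⟨σ⟩` be cyclic of order `n` acting on an abelian group `A` generated
as a `ℤ[G]`-module by one element `Q`, and suppose the trace `P = Σ_{ℓ=0}^{n-1} σ^ℓ·Q` is a
non-torsion element of `A^G` such that each `σ^ℓ·Q` has trace `P`.  Then an element
`Σ_ℓ a_ℓ (σ^ℓ·Q)` has trace zero iff `Σ_ℓ a_ℓ = 0`, and consequently
`ker(Tr) = (σ-1)·A`, i.e. `H¹(G, A) = 0`. -/
theorem stmt_8 {A : Type*} [AddCommGroup A] {n : ℕ} (hn : 0 < n)
    (σ : AddAut A) (hσ : n • σ = 0) (Q P : A)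
    (hgen : ∀ x : A, ∃ a : ℕ → ℤ, x = ∑ ℓ ∈ Finset.range n, a ℓ • (ℓ • σ) Q)
    (hP : P = ∑ ℓ ∈ Finset.range n, (ℓ • σ) Q)
    (hPfix : σ P = P)
    (hPnontors : ∀ k : ℤ, k ≠ 0 → k • P ≠ 0)
    (htr : ∀ ℓ : ℕ, (∑ i ∈ Finset.range n, (i • σ) ((ℓ • σ) Q)) = P) :
    (∀ a : ℕ → ℤ,
      (∑ i ∈ Finset.range n, (i • σ) (∑ ℓ ∈ Finset.range n, a ℓ • (ℓ • σ) Q)) = 0 ↔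
        (∑ ℓ ∈ Finset.range n, a ℓ) = 0) ∧
    (∀ x : A, (∑ i ∈ Finset.range n, (i • σ) x) = 0 ↔ ∃ y : A, x = σ y - y) := by
  have hsucc : ∀ (i : ℕ) (x : A), ((i + 1) • σ) x = (i • σ) (σ x) := by
    intro i x
    rw [succ_nsmul]
    rfl
  have key : ∀ a : ℕ → ℤ,
      (∑ i ∈ Finset.range n, (i • σ) (∑ ℓ ∈ Finset.range n, a ℓ • (ℓ • σ) Q))
        = (∑ ℓ ∈ Finset.range n, a ℓ) • P := by
    intro a
    calc ∑ i ∈ Finset.range n, (i • σ) (∑ ℓ ∈ Finset.range n, a ℓ • (ℓ • σ) Q)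
        = ∑ i ∈ Finset.range n, ∑ ℓ ∈ Finset.range n, a ℓ • (i • σ) ((ℓ • σ) Q) := by
          simp [map_sum, map_zsmul]
      _ = ∑ ℓ ∈ Finset.range n, a ℓ • ∑ i ∈ Finset.range n, (i • σ) ((ℓ • σ) Q) := by
          rw [Finset.sum_comm]
          simp [Finset.smul_sum]
      _ = (∑ ℓ ∈ Finset.range n, a ℓ) • P := by
          simp [htr, Finset.sum_smul]
  have keyiff : ∀ a : ℕ → ℤ,
      (∑ i ∈ Finset.range n, (i • σ) (∑ ℓ ∈ Finset.range n, a ℓ • (ℓ • σ) Q)) = 0 ↔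
        (∑ ℓ ∈ Finset.range n, a ℓ) = 0 := by
    intro a
    rw [key a]
    constructor
    · intro h
      by_contra hs
      exact hPnontors _ hs h
    · intro h
      rw [h, zero_smul]
  refine ⟨keyiff, fun x => ⟨?_, ?_⟩⟩
  · intro hx
    obtain ⟨a, rfl⟩ := hgen x
    have hsum : (∑ ℓ ∈ Finset.range n, a ℓ) = 0 := (keyiff a).mp hx
    refine ⟨∑ ℓ ∈ Finset.range n, a ℓ • (∑ j ∈ Finset.range ℓ, (j • σ) Q), ?_⟩
    have : σ (∑ ℓ ∈ Finset.range n, a ℓ • (∑ j ∈ Finset.range ℓ, (j • σ) Q))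
          - (∑ ℓ ∈ Finset.range n, a ℓ • (∑ j ∈ Finset.range ℓ, (j • σ) Q))
        = ∑ ℓ ∈ Finset.range n, a ℓ • ((ℓ • σ) Q - Q) := by
      rw [map_sum, ← Finset.sum_sub_distrib]
      refine Finset.sum_congr rfl fun ℓ _ => ?_
      rw [map_zsmul, ← smul_sub]
      congr 1
      rw [map_sum, ← Finset.sum_sub_distrib]
      have : ∀ j ∈ Finset.range ℓ, σ ((j • σ) Q) - (j • σ) Q
          = ((j + 1) • σ) Q - (j • σ) Q := by
        intro j _
        rw [succ_nsmul']
        rfl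
      rw [Finset.sum_congr rfl this, Finset.sum_range_sub (fun j => (j • σ) Q)]
      simp
    rw [this]
    simp only [smul_sub, Finset.sum_sub_distrib, ← Finset.sum_smul]
    rw [hsum, zero_smul, sub_zero]
  · rintro ⟨y, rfl⟩
    have : ∀ i ∈ Finset.range n, (i • σ) (σ y - y) = ((i + 1) • σ) y - (i • σ) y := by
      intro i _
      rw [map_sub, hsucc]
    rw [Finset.sum_congr rfl this, Finset.sum_range_sub (fun i => (i • σ) y), hσ]
    simp
end
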